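/- Let (X,φ) and (Y,ψ) be Smale spaces that are asymptotically continuous orbit equivalent via a homeomorphism h : X → Y with cocycle data (c₁, c₂, d₁, d₂). Let x ∈ X be an asymptotic p-periodic point (p ∈ ℤ, p ≠ 0) and suppose c_h^p(x) := c₁^p(x) + d₁(φ^p(x),x) ≠ 0, so that h(x) and h(φ(x)) are asymptotic periodic points of (Y,ψ) and the limits η^s(h(x)) = lim_{k→∞} ψ^{|c_h^p(x)|k}(h(x)), η^u(h(x)) = lim_{k→∞} ψ^{−|c_h^p(x)|k}(h(x)) exist (and similarly for h(φ(x))). Then: (i) η^s(h(φ(x))) = ψ^{c₁(x)}(η^s(h(x))) and η^u(h(φ(x))) = ψ^{c₁(x)}(η^u(h(x))); (ii) if x is a p-periodic point (φ^p(x) = x), then ψ^{c₁^p(x)}(η^s(h(x))) = η^s(h(x)) and ψ^{c₁^p(x)}(η^u(h(x))) = η^u(h(x)); (iii) if moreover x, h(x) and h(φ(x)) are all periodic points, then η^s(h(x)) = η^u(h(x)) = h(x), η^s(h(φ(x))) = η^u(h(φ(x))) = h(φ(x)), and h(φ(x)) = ψ^{c₁(x)}(h(x)). -/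

import Mathlib

open Filter Set Topology

noncomputable section

/-- Integer iterate of a homeomorphism. -/
def hIter {X : Type*} [TopologicalSpace X] (φ : X ≃ₜ X) (n : ℤ) (x : X) : X :=
  ((φ.toEquiv : Equiv.Perm X) ^ n) x

/-- The cocycle sums `f^n` of a function `f : X → ℤ` along the iterates of `φ`:
`f^n(x) = Σ_{i=0}^{n-1} f(φ^i(x))` for `n > 0`, `f^0 = 0`, and
`f^n(x) = −Σ_{i=n}^{-1} f(φ^i(x))` for `n < 0`. -/
def cSum {X : Type*} [TopologicalSpace X] (φ : X ≃ₜ X) (f : X → ℤ) (n : ℤ) (x : X) : ℤ :=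
  if 0 ≤ n then ∑ i ∈ Finset.range n.toNat, f (hIter φ i x)
  else -∑ i ∈ Finset.range (-n).toNat, f (hIter φ (n + i) x)

/-- Stable asymptotic pairs (limit definition). -/
def asympS {X : Type*} [MetricSpace X] (φ : X ≃ₜ X) : Set (X × X) :=
  {p | Tendsto (fun n : ℕ => dist (hIter φ n p.1) (hIter φ n p.2)) atTop (nhds 0)}

/-- Unstable asymptotic pairs (limit definition). -/
def asympU {X : Type*} [MetricSpace X] (φ : X ≃ₜ X) : Set (X × X) :=
  {p | Tendsto (fun n : ℕ => dist (hIter φ (-(n : ℤ)) p.1) (hIter φ (-(n : ℤ)) p.2))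
    atTop (nhds 0)}

/-- Asymptotic pairs (limit definition). -/
def asympA {X : Type*} [MetricSpace X] (φ : X ≃ₜ X) : Set (X × X) := asympS φ ∩ asympU φ

/-- The `ω`-limit set of `x`. -/
def omegaSet {X : Type*} [MetricSpace X] (φ : X ≃ₜ X) (x : X) : Set X :=
  {z | ∃ n : ℕ → ℕ, StrictMono n ∧ Tendsto (fun i => hIter φ (n i) x) atTop (nhds z)}

/-- The `α`-limit set of `x`. -/
def alphaSet {X : Type*} [MetricSpace X] (φ : X ≃ₜ X) (x : X) : Set X :=
  {z | ∃ n : ℕ → ℤ, StrictAnti n ∧ Tendsto (fun i => hIter φ (n i) x) atTop (nhds z)}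

/-- A Smale space structure on a compact metric space `X`. -/
structure SmaleSpace (X : Type*) [MetricSpace X] [CompactSpace X] where
  phi : X ≃ₜ X
  eps : ℝ
  lam : ℝ
  br : X → X → X
  eps_pos : 0 < eps
  lam_pos : 0 < lam
  lam_lt_one : lam < 1
  br_cont : ContinuousOn (fun p : X × X => br p.1 p.2) {p : X × X | dist p.1 p.2 < eps}
  br_self : ∀ x : X, br x x = x
  br_assoc_left : ∀ x y z : X, dist x y < eps → dist (br x y) z < eps → dist x z < eps →
    br (br x y) z = br x z
  br_assoc_right : ∀ x y z : X, dist y z < eps → dist x (br y z) < eps → dist x z < eps →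
    br x (br y z) = br x z
  phi_br : ∀ x y : X, dist x y < eps → dist (phi x) (phi y) < eps →
    phi (br x y) = br (phi x) (phi y)
  contract_s : ∀ x y z : X, br y x = y → dist x y < eps → br z x = z → dist x z < eps →
    dist (phi y) (phi z) ≤ lam * dist y z
  contract_u : ∀ x y z : X, br x y = y → dist x y < eps → br x z = z → dist x z < eps →
    dist (phi.symm y) (phi.symm z) ≤ lam * dist y z

namespace SmaleSpace

variable {X Y : Type*} [MetricSpace X] [CompactSpace X] [MetricSpace Y] [CompactSpace Y]

/-- Local stable set `X^s(x,ε)`. -/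
def Xs (S : SmaleSpace X) (x : X) (ε : ℝ) : Set X := {y | S.br y x = y ∧ dist x y < ε}

/-- Local unstable set `X^u(x,ε)`. -/
def Xu (S : SmaleSpace X) (x : X) (ε : ℝ) : Set X := {y | S.br x y = y ∧ dist x y < ε}

def Gs0 (S : SmaleSpace X) : Set (X × X) := {p | p.2 ∈ S.Xs p.1 S.eps}

def Gu0 (S : SmaleSpace X) : Set (X × X) := {p | p.2 ∈ S.Xu p.1 S.eps}

/-- `G_φ^{s,n} = (φ×φ)^{-n}(G_φ^{s,0})`. -/
def GsN (S : SmaleSpace X) (n : ℤ) : Set (X × X) :=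
  {p | (hIter S.phi n p.1, hIter S.phi n p.2) ∈ S.Gs0}

/-- `G_φ^{u,n} = (φ×φ)^{n}(G_φ^{u,0})`. -/
def GuN (S : SmaleSpace X) (n : ℤ) : Set (X × X) :=
  {p | (hIter S.phi (-n) p.1, hIter S.phi (-n) p.2) ∈ S.Gu0}

def GaN (S : SmaleSpace X) (n : ℤ) : Set (X × X) := S.GsN n ∩ S.GuN n

/-- The asymptotic equivalence relation `G_φ^a = ⋃_{n ≥ 0} G_φ^{a,n}`. -/
def Ga (S : SmaleSpace X) : Set (X × X) := ⋃ n : ℕ, S.GaN n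

lemma gaN_subset_ga (S : SmaleSpace X) (n : ℕ) : S.GaN n ⊆ S.Ga :=
  Set.subset_iUnion (fun k : ℕ => S.GaN k) n

/-- The inductive limit topology on `G_φ^a`: a set is open iff its intersection with each
`G_φ^{a,n}` is open in the subspace topology from `X × X`. -/
def gaTopology (S : SmaleSpace X) : TopologicalSpace ↥S.Ga :=
  ⨆ n : ℕ, TopologicalSpace.coinduced (Set.inclusion (S.gaN_subset_ga n)) inferInstance

/-- Irreducibility of a Smale space. -/
def Irreducible (S : SmaleSpace X) : Prop :=
  ∀ U V : Set X, IsOpen U → U.Nonempty → IsOpen V → V.Nonempty →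
    ∃ K : ℕ, ((hIter S.phi K '' U) ∩ V).Nonempty

def IsPeriodicPoint (S : SmaleSpace X) (x : X) : Prop :=
  ∃ p : ℕ, 0 < p ∧ hIter S.phi p x = x

/-- `h` is a flip conjugacy between `(X,φ)` and `(Y,ψ)`. -/
def IsFlipConjugacy (S : SmaleSpace X) (T : SmaleSpace Y) (h : X ≃ₜ Y) : Prop :=
  (∀ x, h (S.phi x) = T.phi (h x)) ∨ (∀ x, h (S.phi x) = T.phi.symm (h x))

def FlipConjugate (S : SmaleSpace X) (T : SmaleSpace Y) : Prop :=
  ∃ h : X ≃ₜ Y, IsFlipConjugacy S T h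

/-- An isomorphism of the principal étale groupoids `G_φ^a` and `G_ψ^a`:
a bijection which is a homeomorphism for the inductive limit topologies and preserves
the (equivalence relation) groupoid structure. -/
structure GaIso (S : SmaleSpace X) (T : SmaleSpace Y) where
  toEquiv : ↥S.Ga ≃ ↥T.Ga
  cont : @Continuous _ _ S.gaTopology T.gaTopology toEquiv
  cont_symm : @Continuous _ _ T.gaTopology S.gaTopology toEquiv.symm
  map_mul : ∀ p q r : ↥S.Ga, (p : X × X).2 = (q : X × X).1 →
    (r : X × X) = ((p : X × X).1, (q : X × X).2) →
    (toEquiv p : Y × Y).2 = (toEquiv q : Y × Y).1 ∧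
      (toEquiv r : Y × Y) = ((toEquiv p : Y × Y).1, (toEquiv q : Y × Y).2)

end SmaleSpace

namespace SmaleSpace

variable {X Y : Type*} [MetricSpace X] [CompactSpace X] [MetricSpace Y] [CompactSpace Y]

/-- The data of an asymptotic continuous orbit equivalence between two Smale spaces
`(X,φ)` and `(Y,ψ)`: a homeomorphism `h : X → Y`, continuous functions `c₁ : X → ℤ`,
`c₂ : Y → ℤ` and continuous two-cocycle functions `d₁ : G_φ^a → ℤ`, `d₂ : G_ψ^a → ℤ`
satisfying conditions (1), (2) and (i)–(viii) of the definition of asymptotic continuous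
orbit equivalence. -/
structure ACOEData (S : SmaleSpace X) (T : SmaleSpace Y) where
  h : X ≃ₜ Y
  c₁ : X → ℤ
  c₂ : Y → ℤ
  d₁ : X → X → ℤ
  d₂ : Y → Y → ℤ
  c₁_cont : Continuous c₁
  c₂_cont : Continuous c₂
  d₁_cocycle : ∀ x z w : X, (x, z) ∈ S.Ga → (z, w) ∈ S.Ga → d₁ x z + d₁ z w = d₁ x w
  d₂_cocycle : ∀ y w v : Y, (y, w) ∈ T.Ga → (w, v) ∈ T.Ga → d₂ y w + d₂ w v = d₂ y v
  d₁_cont : @Continuous ↥S.Ga ℤ S.gaTopology _ fun p => d₁ (p : X × X).1 (p : X × X).2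
  d₂_cont : @Continuous ↥T.Ga ℤ T.gaTopology _ fun p => d₂ (p : Y × Y).1 (p : Y × Y).2
  cocycle_eq₁ : ∀ (m : ℤ) (x z : X), (x, z) ∈ S.Ga →
    cSum S.phi c₁ m x + d₁ (hIter S.phi m x) (hIter S.phi m z)
      = cSum S.phi c₁ m z + d₁ x z
  cocycle_eq₂ : ∀ (m : ℤ) (y w : Y), (y, w) ∈ T.Ga →
    cSum T.phi c₂ m y + d₂ (hIter T.phi m y) (hIter T.phi m w)
      = cSum T.phi c₂ m w + d₂ y w
  xi₁_mem : ∀ (n : ℤ) (x : X),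
    (hIter T.phi (cSum S.phi c₁ n x) (h x), h (hIter S.phi n x)) ∈ T.Ga
  xi₁_cont : ∀ n : ℤ, @Continuous X ↥T.Ga _ T.gaTopology
    fun x => ⟨(hIter T.phi (cSum S.phi c₁ n x) (h x), h (hIter S.phi n x)), xi₁_mem n x⟩
  xi₂_mem : ∀ (n : ℤ) (y : Y),
    (hIter S.phi (cSum T.phi c₂ n y) (h.symm y), h.symm (hIter T.phi n y)) ∈ S.Ga
  xi₂_cont : ∀ n : ℤ, @Continuous Y ↥S.Ga _ S.gaTopology
    fun y => ⟨(hIter S.phi (cSum T.phi c₂ n y) (h.symm y), h.symm (hIter T.phi n y)),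
      xi₂_mem n y⟩
  eta₁_mem : ∀ x z : X, (x, z) ∈ S.Ga → (hIter T.phi (d₁ x z) (h x), h z) ∈ T.Ga
  eta₁_cont : @Continuous ↥S.Ga ↥T.Ga S.gaTopology T.gaTopology
    fun p => ⟨(hIter T.phi (d₁ (p : X × X).1 (p : X × X).2) (h (p : X × X).1),
      h (p : X × X).2), eta₁_mem (p : X × X).1 (p : X × X).2 p.2⟩
  eta₂_mem : ∀ y w : Y, (y, w) ∈ T.Ga → (hIter S.phi (d₂ y w) (h.symm y), h.symm w) ∈ S.Ga
  eta₂_cont : @Continuous ↥T.Ga ↥S.Ga T.gaTopology S.gaTopology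
    fun p => ⟨(hIter S.phi (d₂ (p : Y × Y).1 (p : Y × Y).2) (h.symm (p : Y × Y).1),
      h.symm (p : Y × Y).2), eta₂_mem (p : Y × Y).1 (p : Y × Y).2 p.2⟩
  cond_v : ∀ (n : ℤ) (x : X),
    cSum T.phi c₂ (cSum S.phi c₁ n x) (h x)
      + d₂ (hIter T.phi (cSum S.phi c₁ n x) (h x)) (h (hIter S.phi n x)) = n
  cond_vi : ∀ (n : ℤ) (y : Y),
    cSum S.phi c₁ (cSum T.phi c₂ n y) (h.symm y)
      + d₁ (hIter S.phi (cSum T.phi c₂ n y) (h.symm y)) (h.symm (hIter T.phi n y)) = n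
  cond_vii : ∀ x z : X, (x, z) ∈ S.Ga →
    cSum T.phi c₂ (d₁ x z) (h x) + d₂ (hIter T.phi (d₁ x z) (h x)) (h z) = 0
  cond_viii : ∀ y w : Y, (y, w) ∈ T.Ga →
    cSum S.phi c₁ (d₂ y w) (h.symm y) + d₁ (hIter S.phi (d₂ y w) (h.symm y)) (h.symm w) = 0

/-- Asymptotic continuous orbit equivalence of Smale spaces. -/
def ACOE (S : SmaleSpace X) (T : SmaleSpace Y) : Prop := Nonempty (ACOEData S T)

/-- Asymptotic flip conjugacy: asymptotic continuous orbit equivalence in which the cocycle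
data can be chosen as `c₁ ≡ 1, c₂ ≡ 1, d₁ ≡ 0, d₂ ≡ 0` or as
`c₁ ≡ −1, c₂ ≡ −1, d₁ ≡ 0, d₂ ≡ 0`. -/
def AsymptoticallyFlipConjugate (S : SmaleSpace X) (T : SmaleSpace Y) : Prop :=
  ∃ A : ACOEData S T,
    (A.c₁ = (fun _ => 1) ∧ A.c₂ = (fun _ => 1) ∧
      A.d₁ = (fun _ _ => 0) ∧ A.d₂ = (fun _ _ => 0)) ∨
    (A.c₁ = (fun _ => -1) ∧ A.c₂ = (fun _ => -1) ∧
      A.d₁ = (fun _ _ => 0) ∧ A.d₂ = (fun _ _ => 0))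

end SmaleSpace



section AuxHIter

variable {Z : Type*} [TopologicalSpace Z] (φ : Z ≃ₜ Z)

lemma hIter_add' (m n : ℤ) (x : Z) : hIter φ (m + n) x = hIter φ m (hIter φ n x) := by
  simp [hIter, zpow_add, Equiv.Perm.mul_apply]

lemma hIter_zero' (x : Z) : hIter φ 0 x = x := by simp [hIter]

lemma hIter_one' (x : Z) : hIter φ 1 x = φ x := by simp [hIter]

lemma hIter_neg_one' (x : Z) : hIter φ (-1) x = φ.symm x := by
  simp [hIter, Equiv.Perm.inv_def]

lemma hIter_natCast' (n : ℕ) (x : Z) : hIter φ (n : ℤ) x = (⇑φ)^[n] x := by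
  induction n with
  | zero => simp [hIter]
  | succ k ih =>
      have : ((k+1 : ℕ) : ℤ) = 1 + (k : ℤ) := by push_cast; ring
      rw [this, hIter_add', hIter_one', Function.iterate_succ_apply', ih]

lemma hIter_neg_natCast' (n : ℕ) (x : Z) : hIter φ (-(n : ℤ)) x = (⇑φ.symm)^[n] x := by
  induction n with
  | zero => simp [hIter]
  | succ k ih =>
      have : (-((k+1 : ℕ) : ℤ)) = -1 + -(k : ℤ) := by push_cast; ring
      rw [this, hIter_add', hIter_neg_one', Function.iterate_succ_apply', ih]

lemma continuous_hIter' (n : ℤ) : Continuous (fun x : Z => hIter φ n x) := by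
  rcases n with n | n
  · have : (fun x : Z => hIter φ (Int.ofNat n) x) = (⇑φ)^[n] := by
      funext x; exact hIter_natCast' φ n x
    rw [this]; exact φ.continuous.iterate n
  · have : (fun x : Z => hIter φ (Int.negSucc n) x) = (⇑φ.symm)^[n+1] := by
      funext x
      have : (Int.negSucc n) = -((n+1 : ℕ) : ℤ) := by rw [Int.negSucc_eq]; push_cast; ring
      rw [this, hIter_neg_natCast']
    rw [this]; exact φ.symm.continuous.iterate (n+1)

lemma hIter_fix_neg {c : ℤ} {L : Z} (h : hIter φ c L = L) : hIter φ (-c) L = L := by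
  conv_lhs => rw [← h]
  rw [← hIter_add', neg_add_cancel, hIter_zero']

lemma hIter_fix_mul {a : ℤ} {L : Z} (h : hIter φ a L = L) (m : ℕ) :
    hIter φ ((m : ℤ) * a) L = L := by
  induction m with
  | zero => simp [hIter_zero']
  | succ k ih =>
      have h1 : ((k+1 : ℕ) : ℤ) * a = (k : ℤ) * a + a := by push_cast; ring
      rw [h1, hIter_add', h, ih]

lemma hIter_fix_abs {c : ℤ} {L : Z} (h : hIter φ |c| L = L) : hIter φ c L = L := by
  rcases abs_cases c with ⟨h1, _⟩ | ⟨h1, _⟩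
  · rwa [h1] at h
  · rw [h1] at h
    have := hIter_fix_neg φ h
    rwa [neg_neg] at this

lemma cSum_one' (f : Z → ℤ) (x : Z) : cSum φ f 1 x = f x := by
  simp [cSum, hIter_zero']

end AuxHIter

section AuxLimits

variable {Y : Type*} [MetricSpace Y]

lemma lim_eq_of_dist' {f g : ℕ → Y} {L M : Y}
    (hf : Tendsto f atTop (nhds L)) (hg : Tendsto g atTop (nhds M))
    (hd : Tendsto (fun k => dist (f k) (g k)) atTop (nhds 0)) : L = M := by
  have h1 : Tendsto (fun k => dist (f k) (g k)) atTop (nhds (dist L M)) := hf.dist hg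
  exact dist_eq_zero.mp (tendsto_nhds_unique h1 hd)

lemma hIter_fix_of_shift {Y : Type*} [MetricSpace Y] (ψ : Y ≃ₜ Y) (c : ℤ) {f : ℕ → Y} {L : Y}
    (hf : Tendsto f atTop (nhds L)) (hshift : ∀ k, f (k+1) = hIter ψ c (f k)) :
    hIter ψ c L = L := by
  have h1 : Tendsto (fun k => f (k+1)) atTop (nhds L) := hf.comp (tendsto_add_atTop_nat 1)
  have h2 : Tendsto (fun k => hIter ψ c (f k)) atTop (nhds (hIter ψ c L)) :=
    ((continuous_hIter' ψ c).tendsto L).comp hf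
  have h3 : (fun k => f (k+1)) = fun k => hIter ψ c (f k) := funext hshift
  rw [h3] at h1
  exact tendsto_nhds_unique h2 h1

lemma eq_of_periodic_subseq {f : ℕ → Y} {L c : Y} {q : ℕ} (hq : 0 < q)
    (hf : Tendsto f atTop (nhds L)) (hc : ∀ k, f (q * k) = c) : L = c := by
  have hm : Tendsto (fun k : ℕ => q * k) atTop atTop :=
    tendsto_atTop_mono (fun k => Nat.le_mul_of_pos_left k hq) tendsto_id
  have h1 : Tendsto (fun k => f (q * k)) atTop (nhds L) := hf.comp hm
  have h2 : Tendsto (fun _ : ℕ => c) atTop (nhds L) := by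
    have h3 : (fun k => f (q * k)) = fun _ : ℕ => c := funext hc
    rwa [h3] at h1
  exact tendsto_nhds_unique h2 tendsto_const_nhds

end AuxLimits

namespace SmaleSpace

variable {Y : Type*} [MetricSpace Y] [CompactSpace Y] (T : SmaleSpace Y)

lemma ga_refl' (z : Y) : (z, z) ∈ T.Ga := by
  apply T.gaN_subset_ga 0
  constructor
  · show (hIter T.phi 0 z, hIter T.phi 0 z) ∈ T.Gs0
    rw [hIter_zero']
    exact ⟨T.br_self z, by simpa using T.eps_pos⟩
  · show (hIter T.phi (-(0:ℤ)) z, hIter T.phi (-(0:ℤ)) z) ∈ T.Gu0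
    rw [neg_zero, hIter_zero']
    exact ⟨T.br_self z, by simpa using T.eps_pos⟩

lemma stable_iterate {a b : Y} (hbr : T.br b a = b) (hd : dist a b < T.eps) (k : ℕ) :
    T.br ((⇑T.phi)^[k] b) ((⇑T.phi)^[k] a) = (⇑T.phi)^[k] b ∧
      dist ((⇑T.phi)^[k] a) ((⇑T.phi)^[k] b) ≤ T.lam ^ k * dist a b := by
  induction k with
  | zero => exact ⟨by simpa using hbr, by simp⟩
  | succ k ih =>
      obtain ⟨ibr, idist⟩ := ih
      set a' := (⇑T.phi)^[k] a
      set b' := (⇑T.phi)^[k] b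
      have hlamk : T.lam ^ k ≤ 1 := pow_le_one₀ T.lam_pos.le T.lam_lt_one.le
      have hdk : dist a' b' < T.eps :=
        lt_of_le_of_lt (idist.trans (mul_le_of_le_one_left dist_nonneg hlamk)) hd
      have step1 : dist (T.phi b') (T.phi a') ≤ T.lam * dist b' a' :=
        T.contract_s a' b' a' ibr hdk (T.br_self a') (by simpa using T.eps_pos)
      have hdk2 : dist (T.phi b') (T.phi a') < T.eps := by
        have h1 : T.lam * dist b' a' < T.eps := by
          rw [dist_comm]
          nlinarith [dist_nonneg (x := a') (y := b'), T.lam_pos, T.lam_lt_one]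
        exact lt_of_le_of_lt step1 h1
      have hbr2 : T.br (T.phi b') (T.phi a') = T.phi b' := by
        have h2 := T.phi_br b' a' (by rwa [dist_comm]) hdk2
        rw [ibr] at h2
        exact h2.symm
      constructor
      · rw [Function.iterate_succ_apply', Function.iterate_succ_apply']
        exact hbr2
      · rw [Function.iterate_succ_apply', Function.iterate_succ_apply']
        calc dist (T.phi a') (T.phi b') = dist (T.phi b') (T.phi a') := dist_comm _ _
          _ ≤ T.lam * dist b' a' := step1
          _ = T.lam * dist a' b' := by rw [dist_comm]
          _ ≤ T.lam * (T.lam ^ k * dist a b) :=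
              mul_le_mul_of_nonneg_left idist T.lam_pos.le
          _ = T.lam ^ (k+1) * dist a b := by ring

lemma unstable_iterate {a b : Y} (hbr : T.br a b = b) (hd : dist a b < T.eps) (k : ℕ) :
    T.br ((⇑T.phi.symm)^[k] a) ((⇑T.phi.symm)^[k] b) = (⇑T.phi.symm)^[k] b ∧
      dist ((⇑T.phi.symm)^[k] a) ((⇑T.phi.symm)^[k] b) ≤ T.lam ^ k * dist a b := by
  induction k with
  | zero => exact ⟨by simpa using hbr, by simp⟩
  | succ k ih =>
      obtain ⟨ibr, idist⟩ := ih
      set a' := (⇑T.phi.symm)^[k] a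
      set b' := (⇑T.phi.symm)^[k] b
      have hlamk : T.lam ^ k ≤ 1 := pow_le_one₀ T.lam_pos.le T.lam_lt_one.le
      have hdk : dist a' b' < T.eps :=
        lt_of_le_of_lt (idist.trans (mul_le_of_le_one_left dist_nonneg hlamk)) hd
      have step1 : dist (T.phi.symm b') (T.phi.symm a') ≤ T.lam * dist b' a' :=
        T.contract_u a' b' a' ibr hdk (T.br_self a') (by simpa using T.eps_pos)
      have hdk2 : dist (T.phi.symm a') (T.phi.symm b') < T.eps := by
        rw [dist_comm]
        have h1 : T.lam * dist b' a' < T.eps := by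
          rw [dist_comm]
          nlinarith [dist_nonneg (x := a') (y := b'), T.lam_pos, T.lam_lt_one]
        exact lt_of_le_of_lt step1 h1
      have hbr2 : T.br (T.phi.symm a') (T.phi.symm b') = T.phi.symm b' := by
        have h2 := T.phi_br (T.phi.symm a') (T.phi.symm b') hdk2
          (by simpa [Homeomorph.apply_symm_apply] using hdk)
        rw [Homeomorph.apply_symm_apply, Homeomorph.apply_symm_apply, ibr] at h2
        have h3 := congrArg T.phi.symm h2
        rw [Homeomorph.symm_apply_apply] at h3
        exact h3
      constructor
      · rw [Function.iterate_succ_apply', Function.iterate_succ_apply']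
        exact hbr2
      · rw [Function.iterate_succ_apply', Function.iterate_succ_apply']
        calc dist (T.phi.symm a') (T.phi.symm b')
            = dist (T.phi.symm b') (T.phi.symm a') := dist_comm _ _
          _ ≤ T.lam * dist b' a' := step1
          _ = T.lam * dist a' b' := by rw [dist_comm]
          _ ≤ T.lam * (T.lam ^ k * dist a b) :=
              mul_le_mul_of_nonneg_left idist T.lam_pos.le
          _ = T.lam ^ (k+1) * dist a b := by ring

lemma tendsto_dist_ga_atTop {y w : Y} (h : (y, w) ∈ T.Ga) {g : ℕ → ℤ}
    (hg : Tendsto g atTop atTop) :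
    Tendsto (fun k => dist (hIter T.phi (g k) y) (hIter T.phi (g k) w)) atTop (nhds 0) := by
  obtain ⟨n, hn⟩ : ∃ n : ℕ, (y, w) ∈ T.GaN n := by
    simpa [Ga, Set.mem_iUnion] using h
  obtain ⟨hs, -⟩ := hn
  set a := hIter T.phi n y with ha
  set b := hIter T.phi n w with hb
  have hbr : T.br b a = b := hs.1
  have hd : dist a b < T.eps := hs.2
  rw [Metric.tendsto_atTop]
  intro ε hε
  have hto : Tendsto (fun j : ℕ => T.lam ^ j * dist a b) atTop (nhds 0) := by
    simpa using (tendsto_pow_atTop_nhds_zero_of_lt_one T.lam_pos.le T.lam_lt_one).mul_const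
      (dist a b)
  obtain ⟨J, hJ⟩ := Metric.tendsto_atTop.mp hto ε hε
  obtain ⟨N, hN⟩ := Filter.eventually_atTop.mp (Filter.tendsto_atTop.mp hg ((n : ℤ) + J))
  refine ⟨N, fun k hk => ?_⟩
  have hgk : (n : ℤ) + J ≤ g k := hN k hk
  have hnn : (0 : ℤ) ≤ g k - n := by omega
  set j := (g k - n).toNat with hj
  have hjz : (j : ℤ) = g k - n := Int.toNat_of_nonneg hnn
  have hjJ : J ≤ j := by omega
  have hrw : ∀ u : Y, hIter T.phi (g k) u = (⇑T.phi)^[j] (hIter T.phi n u) := by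
    intro u
    have h1 : g k = (j : ℤ) + n := by omega
    rw [h1, hIter_add', hIter_natCast']
  obtain ⟨-, hdist⟩ := T.stable_iterate hbr hd j
  have hb2 : T.lam ^ j * dist a b < ε := by
    have := hJ j hjJ
    rw [Real.dist_eq, sub_zero, abs_of_nonneg (mul_nonneg (pow_nonneg T.lam_pos.le j) dist_nonneg)] at this
    exact this
  rw [Real.dist_eq, sub_zero, abs_of_nonneg dist_nonneg, hrw y, hrw w]
  exact lt_of_le_of_lt hdist hb2

lemma tendsto_dist_ga_atBot {y w : Y} (h : (y, w) ∈ T.Ga) {g : ℕ → ℤ}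
    (hg : Tendsto g atTop atBot) :
    Tendsto (fun k => dist (hIter T.phi (g k) y) (hIter T.phi (g k) w)) atTop (nhds 0) := by
  obtain ⟨n, hn⟩ : ∃ n : ℕ, (y, w) ∈ T.GaN n := by
    simpa [Ga, Set.mem_iUnion] using h
  obtain ⟨-, hu⟩ := hn
  set a := hIter T.phi (-(n : ℤ)) y with ha
  set b := hIter T.phi (-(n : ℤ)) w with hb
  have hbr : T.br a b = b := hu.1
  have hd : dist a b < T.eps := hu.2
  rw [Metric.tendsto_atTop]
  intro ε hε
  have hto : Tendsto (fun j : ℕ => T.lam ^ j * dist a b) atTop (nhds 0) := by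
    simpa using (tendsto_pow_atTop_nhds_zero_of_lt_one T.lam_pos.le T.lam_lt_one).mul_const
      (dist a b)
  obtain ⟨J, hJ⟩ := Metric.tendsto_atTop.mp hto ε hε
  obtain ⟨N, hN⟩ := Filter.eventually_atTop.mp (Filter.tendsto_atBot.mp hg (-(n : ℤ) - J))
  refine ⟨N, fun k hk => ?_⟩
  have hgk : g k ≤ -(n : ℤ) - J := hN k hk
  have hnn : (0 : ℤ) ≤ -(n : ℤ) - g k := by omega
  set j := (-(n : ℤ) - g k).toNat with hj
  have hjz : (j : ℤ) = -(n : ℤ) - g k := Int.toNat_of_nonneg hnn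
  have hjJ : J ≤ j := by omega
  have hrw : ∀ u : Y, hIter T.phi (g k) u = (⇑T.phi.symm)^[j] (hIter T.phi (-(n : ℤ)) u) := by
    intro u
    have h1 : g k = -(j : ℤ) + -(n : ℤ) := by omega
    rw [h1, hIter_add', hIter_neg_natCast']
  obtain ⟨-, hdist⟩ := T.unstable_iterate hbr hd j
  have hb2 : T.lam ^ j * dist a b < ε := by
    have := hJ j hjJ
    rw [Real.dist_eq, sub_zero, abs_of_nonneg (mul_nonneg (pow_nonneg T.lam_pos.le j) dist_nonneg)] at this
    exact this
  rw [Real.dist_eq, sub_zero, abs_of_nonneg dist_nonneg, hrw y, hrw w]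
  exact lt_of_le_of_lt hdist hb2

end SmaleSpace


/-- behaviour of the limit points `η^s`, `η^u` of images of asymptotic
periodic points under an asymptotic continuous orbit equivalence. -/
theorem acoe_eta_limits {X Y : Type*} [MetricSpace X] [CompactSpace X]
    [MetricSpace Y] [CompactSpace Y] (S : SmaleSpace X) (T : SmaleSpace Y)
    (A : SmaleSpace.ACOEData S T) (x : X) (p : ℤ) (hp : p ≠ 0)
    (hx : (hIter S.phi p x, x) ∈ S.Ga)
    (chp : ℤ) (hchp : chp = cSum S.phi A.c₁ p x + A.d₁ (hIter S.phi p x) x)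
    (hchp0 : chp ≠ 0)
    (ys yu ys' yu' : Y)
    (hys : Tendsto (fun k : ℕ => hIter T.phi (|chp| * k) (A.h x)) atTop (nhds ys))
    (hyu : Tendsto (fun k : ℕ => hIter T.phi (-(|chp| * k)) (A.h x)) atTop (nhds yu))
    (hys' : Tendsto (fun k : ℕ => hIter T.phi (|chp| * k) (A.h (S.phi x)))
      atTop (nhds ys'))
    (hyu' : Tendsto (fun k : ℕ => hIter T.phi (-(|chp| * k)) (A.h (S.phi x)))
      atTop (nhds yu')) :
    (ys' = hIter T.phi (A.c₁ x) ys ∧ yu' = hIter T.phi (A.c₁ x) yu) ∧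
    (hIter S.phi p x = x →
      (hIter T.phi (cSum S.phi A.c₁ p x) ys = ys ∧
       hIter T.phi (cSum S.phi A.c₁ p x) yu = yu)) ∧
    ((hIter S.phi p x = x ∧ T.IsPeriodicPoint (A.h x) ∧
        T.IsPeriodicPoint (A.h (S.phi x))) →
      (ys = A.h x ∧ yu = A.h x ∧ ys' = A.h (S.phi x) ∧ yu' = A.h (S.phi x) ∧
       A.h (S.phi x) = hIter T.phi (A.c₁ x) (A.h x))) := by
  have habs : (1:ℤ) ≤ |chp| := by
    rcases abs_cases chp with ⟨h,_⟩|⟨h,_⟩ <;> omega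
  have hg_top : Tendsto (fun k : ℕ => |chp| * (k : ℤ)) atTop atTop := by
    apply tendsto_atTop_mono (fun k => le_mul_of_one_le_left (Int.natCast_nonneg k) habs)
    exact tendsto_natCast_atTop_atTop
  have hg_bot : Tendsto (fun k : ℕ => -(|chp| * (k : ℤ))) atTop atBot :=
    tendsto_neg_atTop_atBot.comp hg_top
  have hmem : (hIter T.phi (A.c₁ x) (A.h x), A.h (S.phi x)) ∈ T.Ga := by
    have h1 := A.xi₁_mem 1 x
    rwa [cSum_one', hIter_one'] at h1
  have key_s : ys' = hIter T.phi (A.c₁ x) ys := by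
    have hf : Tendsto (fun k : ℕ => hIter T.phi (|chp| * k) (hIter T.phi (A.c₁ x) (A.h x)))
        atTop (nhds (hIter T.phi (A.c₁ x) ys)) := by
      have heq : (fun k : ℕ => hIter T.phi (|chp| * k) (hIter T.phi (A.c₁ x) (A.h x)))
          = fun k : ℕ => hIter T.phi (A.c₁ x) (hIter T.phi (|chp| * k) (A.h x)) := by
        funext k; rw [← hIter_add', ← hIter_add', add_comm]
      rw [heq]
      exact ((continuous_hIter' T.phi (A.c₁ x)).tendsto ys).comp hys
    have hd := T.tendsto_dist_ga_atTop hmem hg_top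
    exact (lim_eq_of_dist' hf hys' hd).symm
  have key_u : yu' = hIter T.phi (A.c₁ x) yu := by
    have hf : Tendsto (fun k : ℕ => hIter T.phi (-(|chp| * k)) (hIter T.phi (A.c₁ x) (A.h x)))
        atTop (nhds (hIter T.phi (A.c₁ x) yu)) := by
      have heq : (fun k : ℕ => hIter T.phi (-(|chp| * k)) (hIter T.phi (A.c₁ x) (A.h x)))
          = fun k : ℕ => hIter T.phi (A.c₁ x) (hIter T.phi (-(|chp| * k)) (A.h x)) := by
        funext k; rw [← hIter_add', ← hIter_add', add_comm]
      rw [heq]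
      exact ((continuous_hIter' T.phi (A.c₁ x)).tendsto yu).comp hyu
    have hd := T.tendsto_dist_ga_atBot hmem hg_bot
    exact (lim_eq_of_dist' hf hyu' hd).symm
  have part2 : hIter S.phi p x = x →
      hIter T.phi (cSum S.phi A.c₁ p x) ys = ys ∧
        hIter T.phi (cSum S.phi A.c₁ p x) yu = yu := by
    intro hper
    have hxx : (x, x) ∈ S.Ga := S.ga_refl' x
    have hd0 : A.d₁ x x = 0 := by
      have := A.d₁_cocycle x x x hxx hxx; omega
    have hchp' : chp = cSum S.phi A.c₁ p x := by rw [hchp, hper, hd0, add_zero]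
    have hfix_s : hIter T.phi |chp| ys = ys := by
      apply hIter_fix_of_shift T.phi |chp| hys
      intro k
      have h1 : |chp| * ((k+1 : ℕ) : ℤ) = |chp| + |chp| * (k : ℤ) := by push_cast; ring
      rw [h1, hIter_add']
    have hfix_u : hIter T.phi (-|chp|) yu = yu := by
      apply hIter_fix_of_shift T.phi (-|chp|) hyu
      intro k
      have h1 : -(|chp| * ((k+1 : ℕ) : ℤ)) = -|chp| + -(|chp| * (k : ℤ)) := by push_cast; ring
      rw [h1, hIter_add']
    constructor
    · rw [← hchp']; exact hIter_fix_abs T.phi hfix_s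
    · rw [← hchp']
      apply hIter_fix_abs T.phi
      have h2 := hIter_fix_neg T.phi hfix_u
      rwa [neg_neg] at h2
  refine ⟨⟨key_s, key_u⟩, part2, ?_⟩
  rintro ⟨hper, ⟨q, hq, hqper⟩, ⟨q', hq', hq'per⟩⟩
  set m := |chp|.toNat with hm
  have hmz : (m : ℤ) = |chp| := Int.toNat_of_nonneg (abs_nonneg chp)
  have hqneg : hIter T.phi (-(q : ℤ)) (A.h x) = A.h x := hIter_fix_neg T.phi hqper
  have hq'neg : hIter T.phi (-(q' : ℤ)) (A.h (S.phi x)) = A.h (S.phi x) :=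
    hIter_fix_neg T.phi hq'per
  have hysx : ys = A.h x := by
    apply eq_of_periodic_subseq hq hys
    intro k
    have h1 : |chp| * ((q * k : ℕ) : ℤ) = ((m * k : ℕ) : ℤ) * (q : ℤ) := by
      push_cast; rw [hmz]; ring
    rw [h1]
    exact hIter_fix_mul T.phi hqper (m * k)
  have hyux : yu = A.h x := by
    apply eq_of_periodic_subseq hq hyu
    intro k
    have h1 : -(|chp| * ((q * k : ℕ) : ℤ)) = ((m * k : ℕ) : ℤ) * (-(q : ℤ)) := by
      push_cast; rw [hmz]; ring
    rw [h1]
    exact hIter_fix_mul T.phi hqneg (m * k)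
  have hys'x : ys' = A.h (S.phi x) := by
    apply eq_of_periodic_subseq hq' hys'
    intro k
    have h1 : |chp| * ((q' * k : ℕ) : ℤ) = ((m * k : ℕ) : ℤ) * (q' : ℤ) := by
      push_cast; rw [hmz]; ring
    rw [h1]
    exact hIter_fix_mul T.phi hq'per (m * k)
  have hyu'x : yu' = A.h (S.phi x) := by
    apply eq_of_periodic_subseq hq' hyu'
    intro k
    have h1 : -(|chp| * ((q' * k : ℕ) : ℤ)) = ((m * k : ℕ) : ℤ) * (-(q' : ℤ)) := by
      push_cast; rw [hmz]; ring
    rw [h1]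
    exact hIter_fix_mul T.phi hq'neg (m * k)
  exact ⟨hysx, hyux, hys'x, hyu'x, by rw [← hys'x, key_s, hysx]⟩
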